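/- For every integer d ≥ 1, ((1 + e^{-2/√d})/2)^d ≤ e^{-√d + 1}. -/

import Mathlib

lemma exp_neg_le_quadratic (x : ℝ) (hx : 0 ≤ x) :
    Real.exp (-x) ≤ 1 - x + x ^ 2 / 2 := by
  set f : ℝ → ℝ := fun t => 1 - t + t ^ 2 / 2 - Real.exp (-t) with hf
  have hderiv : ∀ t : ℝ, HasDerivAt f (-1 + t + Real.exp (-t)) t := by
    intro t
    have h1 : HasDerivAt (fun t : ℝ => Real.exp (-t)) (-Real.exp (-t)) t := by
      simpa [Function.comp_def] using ((Real.hasDerivAt_exp (-t)).comp t (hasDerivAt_neg t))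
    have h2 : HasDerivAt (fun t : ℝ => 1 - t + t ^ 2 / 2) (-1 + t) t := by
      have : HasDerivAt (fun t : ℝ => 1 - t + t ^ 2 / 2) (0 - 1 + (2 * t ^ 1 / 2)) t := by
        exact (((hasDerivAt_const t (1:ℝ)).sub (hasDerivAt_id t)).add
          ((hasDerivAt_pow 2 t).div_const 2))
      simpa using this
    have h3 := h2.sub h1
    simp only [sub_neg_eq_add] at h3
    exact h3
  have hmono : MonotoneOn f (Set.Ici (0:ℝ)) := by
    apply monotoneOn_of_deriv_nonneg (convex_Ici 0)
    · exact (Continuous.continuousOn (by fun_prop))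
    · intro t ht
      exact (hderiv t).differentiableAt.differentiableWithinAt
    · intro t ht
      rw [(hderiv t).deriv]
      have := Real.add_one_le_exp (-t)
      linarith
  have h0 : f 0 ≤ f x := hmono (by simp) hx hx
  simp only [hf] at h0
  norm_num at h0
  linarith

theorem return_prob_bound (d : ℕ) (hd : 1 ≤ d) :
    ((1 + Real.exp (-2 / Real.sqrt d)) / 2) ^ d ≤ Real.exp (-Real.sqrt d + 1) := by
  set s := Real.sqrt d with hs
  have hs1 : 1 ≤ s := by
    rw [hs]
    have : (1:ℝ) ≤ (d:ℝ) := by exact_mod_cast hd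
    simpa using Real.one_le_sqrt.mpr this
  have hspos : 0 < s := lt_of_lt_of_le one_pos hs1
  have hsq : s ^ 2 = (d : ℝ) := Real.sq_sqrt (by positivity)
  set x : ℝ := 2 / s with hx
  have hxpos : 0 < x := by positivity
  have key : (1 + Real.exp (-x)) / 2 ≤ Real.exp (-x / 2 + x ^ 2 / 4) := by
    have h1 := exp_neg_le_quadratic x hxpos.le
    have h2 : (1 + (1 - x + x ^ 2 / 2)) / 2 = (-x / 2 + x ^ 2 / 4) + 1 := by ring
    have h3 := Real.add_one_le_exp (-x / 2 + x ^ 2 / 4)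
    have : (1 + Real.exp (-x)) / 2 ≤ (-x / 2 + x ^ 2 / 4) + 1 := by
      rw [← h2]; linarith
    linarith
  have hbase : 0 ≤ (1 + Real.exp (-x)) / 2 := by positivity
  have hx2 : -2 / s = -x := by rw [hx]; ring
  calc ((1 + Real.exp (-2 / s)) / 2) ^ d
      ≤ (Real.exp (-x / 2 + x ^ 2 / 4)) ^ d := by
        rw [hx2]; exact pow_le_pow_left₀ hbase key d
    _ = Real.exp ((d : ℝ) * (-x / 2 + x ^ 2 / 4)) := by
        rw [← Real.exp_nat_mul]
    _ = Real.exp (-s + 1) := by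
        congr 1
        rw [hx]
        field_simp
        nlinarith [hsq]
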